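/- Let f be a polynomial in n variables over ℂ (n ≥ 1) lying in the cube m³ of the maximal ideal m = (X₁, …, Xₙ) (i.e. f has no terms of degree ≤ 2), and suppose the Jacobian algebra Q_f is a finite-dimensional ℂ-vector space. Then dim_ℂ Q_f ≥ 2ⁿ. -/

import Mathlib

open MvPolynomial

/-- The Jacobian ideal of a multivariate polynomial: the ideal generated by its
partial derivatives. -/
noncomputable def jacobianIdeal {σ : Type*} (f : MvPolynomial σ ℂ) :
    Ideal (MvPolynomial σ ℂ) :=
  Ideal.span (Set.range fun i : σ => MvPolynomial.pderiv i f)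

namespace MilnorAux

variable {n : ℕ}

/-- the maximal ideal at the origin -/
noncomputable def mIdeal (n : ℕ) : Ideal (MvPolynomial (Fin n) ℂ) :=
  Ideal.span (Set.range X)

/-- total degree of an exponent vector -/
def degF {n : ℕ} (α : Fin n →₀ ℕ) : ℕ := ∑ i, α i

lemma degF_add (α β : Fin n →₀ ℕ) : degF (α + β) = degF α + degF β := by
  simp [degF, Finsupp.add_apply, Finset.sum_add_distrib]

lemma one_le_degF {γ : Fin n →₀ ℕ} (h : γ ≠ 0) : 1 ≤ degF γ := by
  by_contra hc
  push_neg at hc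
  apply h
  ext i
  have h0 : ∑ i, γ i = 0 := Nat.lt_one_iff.mp hc
  simpa using Finset.sum_eq_zero_iff.mp h0 i (Finset.mem_univ i)

lemma coeff_zero_of_mem_mIdeal {p : MvPolynomial (Fin n) ℂ} (hp : p ∈ mIdeal n) :
    coeff 0 p = 0 := by
  have h : mIdeal n ≤ RingHom.ker (constantCoeff (σ := Fin n) (R := ℂ)) := by
    rw [mIdeal, Ideal.span_le]
    rintro _ ⟨i, rfl⟩
    simp [RingHom.mem_ker]
  have h2 := h hp
  rw [RingHom.mem_ker] at h2
  rw [← h2, constantCoeff_eq]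

lemma coeff_eq_zero_of_mem_pow :
    ∀ (k : ℕ) (p : MvPolynomial (Fin n) ℂ), p ∈ mIdeal n ^ k →
      ∀ α : Fin n →₀ ℕ, degF α < k → coeff α p = 0 := by
  intro k
  induction k with
  | zero => intro p _ α hα; exact absurd hα (Nat.not_lt_zero _)
  | succ k ih =>
    intro p hp
    rw [pow_succ] at hp
    refine Submodule.mul_induction_on hp ?_ ?_
    · intro a ha b hb α hα
      rw [coeff_mul]
      refine Finset.sum_eq_zero fun x hx => ?_
      rw [Finset.HasAntidiagonal.mem_antidiagonal] at hx
      by_cases h2 : x.2 = 0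
      · have hcb : coeff x.2 b = 0 := by rw [h2]; exact coeff_zero_of_mem_mIdeal hb
        rw [hcb, mul_zero]
      · have h1 : degF x.1 < k := by
          have hd2 := one_le_degF h2
          have hsum : degF x.1 + degF x.2 = degF α := by rw [← degF_add, hx]
          omega
        rw [ih a ha x.1 h1, zero_mul]
    · intro a b ha hb α hα
      rw [coeff_add, ha α hα, hb α hα, add_zero]

lemma pderiv_mem_pow (i : Fin n) :
    ∀ (k : ℕ) (p : MvPolynomial (Fin n) ℂ), p ∈ mIdeal n ^ (k + 1) →
      pderiv i p ∈ mIdeal n ^ k := by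
  intro k
  induction k with
  | zero => intro p _; simp
  | succ k ih =>
    intro p hp
    rw [pow_succ] at hp
    refine Submodule.mul_induction_on hp ?_ ?_
    · intro a ha b hb
      rw [pderiv_mul]
      refine Ideal.add_mem _ ?_ ?_
      · have h1 : pderiv i a ∈ mIdeal n ^ k := ih a ha
        have h2 := Ideal.mul_mem_mul h1 hb
        rwa [← pow_succ] at h2
      · exact Ideal.mul_mem_right _ _ ha
    · intro a b ha hb
      rw [map_add]
      exact Ideal.add_mem _ ha hb

/-- sum of counts over all elements equals the card -/
lemma sum_count_univ {m : ℕ} (s : Multiset (Fin m)) :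
    ∑ a, s.count a = Multiset.card s := by
  rw [← Multiset.toFinset_sum_count_eq]
  exact (Finset.sum_subset (Finset.subset_univ _) fun a _ ha =>
    Multiset.count_eq_zero.mpr fun h => ha (Multiset.mem_toFinset.mpr h)).symm

end MilnorAux

namespace MilnorAux2

variable {n L : ℕ}

/-- products of exactly `j` generators times a lift -/
noncomputable def w (g : Fin n → MvPolynomial (Fin n) ℂ) (e : Fin L → MvPolynomial (Fin n) ℂ)
    (j : ℕ) (p : Sym (Fin n) j × Fin L) : MvPolynomial (Fin n) ℂ :=
  ((p.1 : Multiset (Fin n)).map g).prod * e p.2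

/-- products of at most `d` generators (with a padding generator `1`) times a lift -/
noncomputable def vv (g : Fin n → MvPolynomial (Fin n) ℂ) (e : Fin L → MvPolynomial (Fin n) ℂ)
    (d : ℕ) (p : Sym (Fin (n + 1)) d × Fin L) : MvPolynomial (Fin n) ℂ :=
  ((p.1 : Multiset (Fin (n + 1))).map (Fin.snoc g 1)).prod * e p.2

variable {J : Ideal (MvPolynomial (Fin n) ℂ)} {g : Fin n → MvPolynomial (Fin n) ℂ}
  {e : Fin L → MvPolynomial (Fin n) ℂ}

lemma mul_gen_mem_span (i : Fin n) {j : ℕ} {y : MvPolynomial (Fin n) ℂ}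
    (hy : y ∈ Submodule.span ℂ (Set.range (w g e j))) :
    y * g i ∈ Submodule.span ℂ (Set.range (w g e (j + 1))) := by
  have hmap : Submodule.map (LinearMap.mulRight ℂ (g i))
      (Submodule.span ℂ (Set.range (w g e j))) ≤
      Submodule.span ℂ (Set.range (w g e (j + 1))) := by
    rw [Submodule.map_span, Submodule.span_le]
    rintro _ ⟨_, ⟨⟨s, l⟩, rfl⟩, rfl⟩
    apply Submodule.subset_span
    refine ⟨(Sym.mk (i ::ₘ (s : Multiset (Fin n))) (by rw [Multiset.card_cons, Sym.card_coe]), l), ?_⟩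
    simp only [w, LinearMap.mulRight_apply, Sym.coe_mk, Multiset.map_cons, Multiset.prod_cons]
    ring
  exact hmap (Submodule.mem_map_of_mem hy)

lemma spanQ (hJ : J = Ideal.span (Set.range g))
    (hE : ∀ x : MvPolynomial (Fin n) ℂ,
      ∃ (c : Fin L → ℂ) (z : MvPolynomial (Fin n) ℂ), z ∈ J ∧ x = (∑ l, c l • e l) + z) :
    ∀ j : ℕ, ((J ^ j).restrictScalars ℂ) ≤
      Submodule.span ℂ (Set.range (w g e j)) ⊔ ((J ^ (j + 1)).restrictScalars ℂ) := by
  intro j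
  induction j with
  | zero =>
    intro x _
    obtain ⟨c, z, hz, rfl⟩ := hE x
    refine Submodule.add_mem _ ?_ ?_
    · apply Submodule.mem_sup_left
      refine Submodule.sum_mem _ fun l _ => Submodule.smul_mem _ _ ?_
      apply Submodule.subset_span
      refine ⟨((⟨0, rfl⟩ : Sym (Fin n) 0), l), ?_⟩
      simp [w]
      exact one_mul (e l)
    · apply Submodule.mem_sup_right
      simpa using hz
  | succ j ih =>
    intro x hx
    rw [Submodule.restrictScalars_mem, pow_succ] at hx
    refine Submodule.mul_induction_on hx ?_ ?_
    · intro a ha b hb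
      rw [hJ, Ideal.mem_span_range_iff_exists_fun] at hb
      obtain ⟨r, rfl⟩ := hb
      rw [Finset.mul_sum]
      refine Submodule.sum_mem _ fun i _ => ?_
      have hra : r i * a ∈ J ^ j := Ideal.mul_mem_left _ _ ha
      have hmem := ih (by simpa using hra)
      rw [Submodule.mem_sup] at hmem
      obtain ⟨y, hy, z, hz, hyz⟩ := hmem
      have hx2 : a * (r i * g i) = y * g i + z * g i := by
        rw [← add_mul, hyz]; ring
      rw [hx2]
      refine Submodule.add_mem _ ?_ ?_
      · exact Submodule.mem_sup_left (mul_gen_mem_span i hy)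
      · apply Submodule.mem_sup_right
        rw [Submodule.restrictScalars_mem] at hz ⊢
        have hgi : g i ∈ J := hJ ▸ Ideal.subset_span ⟨i, rfl⟩
        have hm := Ideal.mul_mem_mul hz hgi
        rwa [← pow_succ] at hm
    · intro a b ha hb
      exact Submodule.add_mem _ ha hb

lemma range_w_le_range_vv (j : ℕ) :
    Set.range (w g e (j + 1)) ⊆ Set.range (vv g e (j + 1)) := by
  rintro _ ⟨⟨s, l⟩, rfl⟩
  refine ⟨(Sym.mk ((s : Multiset (Fin n)).map Fin.castSucc)
    (by rw [Multiset.card_map, Sym.card_coe]), l), ?_⟩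
  simp only [vv, w, Sym.coe_mk, Multiset.map_map]
  congr 2
  apply Multiset.map_congr rfl
  intro a _
  simp [Function.comp, Fin.snoc_castSucc]

lemma range_vv_le_range_vv_succ (d : ℕ) :
    Set.range (vv g e d) ⊆ Set.range (vv g e (d + 1)) := by
  rintro _ ⟨⟨s, l⟩, rfl⟩
  refine ⟨(Sym.mk (Fin.last n ::ₘ (s : Multiset (Fin (n + 1))))
    (by rw [Multiset.card_cons, Sym.card_coe]), l), ?_⟩
  simp only [vv, Sym.coe_mk, Multiset.map_cons, Multiset.prod_cons, Fin.snoc_last]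
  ring

lemma spanP (hJ : J = Ideal.span (Set.range g))
    (hE : ∀ x : MvPolynomial (Fin n) ℂ,
      ∃ (c : Fin L → ℂ) (z : MvPolynomial (Fin n) ℂ), z ∈ J ∧ x = (∑ l, c l • e l) + z) :
    ∀ d : ℕ, (⊤ : Submodule ℂ (MvPolynomial (Fin n) ℂ)) ≤
      Submodule.span ℂ (Set.range (vv g e d)) ⊔ ((J ^ (d + 1)).restrictScalars ℂ) := by
  intro d
  induction d with
  | zero =>
    intro x _
    obtain ⟨c, z, hz, rfl⟩ := hE x
    refine Submodule.add_mem _ ?_ ?_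
    · apply Submodule.mem_sup_left
      refine Submodule.sum_mem _ fun l _ => Submodule.smul_mem _ _ ?_
      apply Submodule.subset_span
      refine ⟨((⟨0, rfl⟩ : Sym (Fin (n + 1)) 0), l), ?_⟩
      simp [vv]
      exact one_mul (e l)
    · apply Submodule.mem_sup_right
      simpa using hz
  | succ d ih =>
    intro x hx
    have hmem := ih hx
    rw [Submodule.mem_sup] at hmem
    obtain ⟨y, hy, z, hz, rfl⟩ := hmem
    refine Submodule.add_mem _ ?_ ?_
    · exact Submodule.mem_sup_left
        (Submodule.span_mono (range_vv_le_range_vv_succ d) hy)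
    · have hq := spanQ hJ hE (d + 1) hz
      rw [Submodule.mem_sup] at hq
      obtain ⟨u, hu, v', hv, rfl⟩ := hq
      refine Submodule.add_mem _ ?_ (Submodule.mem_sup_right hv)
      exact Submodule.mem_sup_left (Submodule.span_mono (range_w_le_range_vv d) hu)

end MilnorAux2
namespace MilnorAux3
open MilnorAux MilnorAux2

variable {n L : ℕ}

/-- the submodule of polynomials with no monomials of degree `< k` -/
noncomputable def lowCoeff (n k : ℕ) : Submodule ℂ (MvPolynomial (Fin n) ℂ) :=
  ⨅ (α : Fin n →₀ ℕ) (_ : degF α < k), LinearMap.ker (lcoeff ℂ α)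

lemma mem_lowCoeff {k : ℕ} {p : MvPolynomial (Fin n) ℂ} :
    p ∈ lowCoeff n k ↔ ∀ α : Fin n →₀ ℕ, degF α < k → coeff α p = 0 := by
  simp [lowCoeff, Submodule.mem_iInf, LinearMap.mem_ker, lcoeff_apply]

variable {J : Ideal (MvPolynomial (Fin n) ℂ)} {g : Fin n → MvPolynomial (Fin n) ℂ}
  {e : Fin L → MvPolynomial (Fin n) ℂ}

lemma key_count (hJ : J = Ideal.span (Set.range g))
    (hg : ∀ i, g i ∈ mIdeal n ^ 2)
    (hE : ∀ x : MvPolynomial (Fin n) ℂ,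
      ∃ (c : Fin L → ℂ) (z : MvPolynomial (Fin n) ℂ), z ∈ J ∧ x = (∑ l, c l • e l) + z) :
    ∀ d : ℕ, (n + (2 * d + 1)).choose (2 * d + 1) ≤ (n + d).choose d * L := by
  classical
  intro d
  set k := 2 * d + 2 with hk
  set U := lowCoeff n k with hU
  set π := U.mkQ with hπ
  have hJlow : ((J ^ (d + 1)).restrictScalars ℂ) ≤ U := by
    intro p hp
    rw [Submodule.restrictScalars_mem] at hp
    have hJm : J ≤ mIdeal n ^ 2 := by
      rw [hJ, Ideal.span_le]; rintro _ ⟨i, rfl⟩; exact hg i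
    have h2 : p ∈ mIdeal n ^ (2 * (d + 1)) := by
      have h3 := Ideal.pow_right_mono hJm (d + 1) hp
      rwa [← pow_mul] at h3
    rw [hU, mem_lowCoeff]
    intro α hα
    refine coeff_eq_zero_of_mem_pow (2 * (d + 1)) p h2 α (by omega)
  -- the quotient is spanned by the images of `vv g e d`
  have hspan : Submodule.span ℂ (Set.range (π ∘ vv g e d)) = ⊤ := by
    rw [eq_top_iff]
    intro q _
    obtain ⟨x, rfl⟩ := U.mkQ_surjective q
    have hx := spanP hJ hE d (Submodule.mem_top (x := x))
    rw [Submodule.mem_sup] at hx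
    obtain ⟨y, hy, z, hz, rfl⟩ := hx
    have hz0 : π z = 0 := (Submodule.Quotient.mk_eq_zero U).mpr (hJlow hz)
    show π (y + z) ∈ Submodule.span ℂ (Set.range (⇑π ∘ vv g e d))
    rw [map_add, hz0, add_zero]
    have hmem : π y ∈ Submodule.map π (Submodule.span ℂ (Set.range (vv g e d))) :=
      Submodule.mem_map_of_mem hy
    rwa [Submodule.map_span, ← Set.range_comp] at hmem
  haveI hfinQ : Module.Finite ℂ (MvPolynomial (Fin n) ℂ ⧸ U) :=
    ⟨by rw [← hspan]; exact Submodule.fg_span (Set.finite_range _)⟩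
  have hup : Module.finrank ℂ (MvPolynomial (Fin n) ℂ ⧸ U) ≤
      Fintype.card (Sym (Fin (n + 1)) d × Fin L) := by
    have h := finrank_range_le_card (R := ℂ) (π ∘ vv g e d)
    rwa [Set.finrank, hspan, finrank_top] at h
  -- the independent family of low-degree monomials
  set μ : Sym (Fin (n + 1)) (2 * d + 1) → (Fin n →₀ ℕ) := fun s =>
    Finsupp.equivFunOnFinite.symm fun i =>
      Multiset.count (Fin.castSucc i) (s : Multiset (Fin (n + 1))) with hμ
  have hμapp : ∀ s i, μ s i = Multiset.count (Fin.castSucc i) (s : Multiset (Fin (n + 1))) := by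
    intro s i; rw [hμ]; rfl
  have hsumcount : ∀ s : Sym (Fin (n + 1)) (2 * d + 1),
      (∑ i : Fin n, Multiset.count (Fin.castSucc i) (s : Multiset (Fin (n + 1)))) +
        Multiset.count (Fin.last n) (s : Multiset (Fin (n + 1))) = 2 * d + 1 := by
    intro s
    have h1 := sum_count_univ (s : Multiset (Fin (n + 1)))
    rw [Fin.sum_univ_castSucc] at h1
    rw [h1, Sym.card_coe]
  have hμdeg : ∀ s, degF (μ s) ≤ 2 * d + 1 := by
    intro s
    have h2 : degF (μ s) = ∑ i : Fin n,
        Multiset.count (Fin.castSucc i) (s : Multiset (Fin (n + 1))) := by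
      unfold degF
      exact Finset.sum_congr rfl fun i _ => hμapp s i
    have := hsumcount s
    omega
  have hμinj : Function.Injective μ := by
    intro s t hst
    have hpt : ∀ i : Fin n, Multiset.count (Fin.castSucc i) (s : Multiset (Fin (n + 1))) =
        Multiset.count (Fin.castSucc i) (t : Multiset (Fin (n + 1))) := by
      intro i
      rw [← hμapp s i, ← hμapp t i, hst]
    have hsumeq : (∑ i : Fin n, Multiset.count (Fin.castSucc i) (s : Multiset (Fin (n + 1)))) =
        ∑ i : Fin n, Multiset.count (Fin.castSucc i) (t : Multiset (Fin (n + 1))) :=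
      Finset.sum_congr rfl fun i _ => hpt i
    have hs := hsumcount s
    have ht := hsumcount t
    have hlast : Multiset.count (Fin.last n) (s : Multiset (Fin (n + 1))) =
        Multiset.count (Fin.last n) (t : Multiset (Fin (n + 1))) := by omega
    apply Subtype.ext
    rw [Multiset.ext]
    intro a
    refine Fin.lastCases ?_ ?_ a
    · exact hlast
    · exact hpt
  set θ : Sym (Fin (n + 1)) (2 * d + 1) → MvPolynomial (Fin n) ℂ := fun s =>
    monomial (μ s) 1 with hθ
  have hθind : LinearIndependent ℂ θ := by
    have hb := (basisMonomials (Fin n) ℂ).linearIndependent.comp μ hμinj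
    have hfun : θ = (basisMonomials (Fin n) ℂ) ∘ μ := by
      funext s
      rw [hθ]
      simp [coe_basisMonomials]
    rwa [hfun]
  have hdisj : Disjoint (Submodule.span ℂ (Set.range θ)) (LinearMap.ker π) := by
    rw [hπ, Submodule.ker_mkQ, Submodule.disjoint_def]
    intro p hp hpU
    apply MvPolynomial.ext
    intro β
    rw [coeff_zero]
    by_cases hβ : degF β < k
    · exact (mem_lowCoeff.mp hpU) β hβ
    · have hle : Submodule.span ℂ (Set.range θ) ≤ LinearMap.ker (lcoeff ℂ β) := by
        rw [Submodule.span_le]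
        rintro _ ⟨s, rfl⟩
        rw [SetLike.mem_coe, LinearMap.mem_ker, lcoeff_apply, hθ]
        rw [coeff_monomial, if_neg]
        intro hcon
        have := hμdeg s
        rw [hcon] at this
        omega
      simpa using hle hp
  have hind : LinearIndependent ℂ (π ∘ θ) := hθind.map hdisj
  have hlow : Fintype.card (Sym (Fin (n + 1)) (2 * d + 1)) ≤
      Module.finrank ℂ (MvPolynomial (Fin n) ℂ ⧸ U) :=
    hind.fintype_card_le_finrank
  have hcard1 : Fintype.card (Sym (Fin (n + 1)) (2 * d + 1)) =
      (n + (2 * d + 1)).choose (2 * d + 1) := by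
    rw [Sym.card_sym_eq_multichoose, Nat.multichoose_eq, Fintype.card_fin]
    congr 1
    omega
  have hcard2 : Fintype.card (Sym (Fin (n + 1)) d × Fin L) = (n + d).choose d * L := by
    rw [Fintype.card_prod, Fintype.card_fin, Sym.card_sym_eq_multichoose,
      Nat.multichoose_eq, Fintype.card_fin]
    congr 2
    omega
  rw [← hcard1, ← hcard2]
  exact le_trans hlow hup

end MilnorAux3
namespace MilnorNum

lemma pow_succ_bound : ∀ (m b : ℕ),
    (b + 1) ^ (m + 1) ≤ b ^ (m + 1) + (m + 1) * (b + 1) ^ m := by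
  intro m
  induction m with
  | zero =>
    intro b
    simp
  | succ m ih =>
    intro b
    have h2 : (b + 1) * (b + 1) ^ (m + 1) ≤ (b + 1) * (b ^ (m + 1) + (m + 1) * (b + 1) ^ m) :=
      Nat.mul_le_mul_left _ (ih b)
    have h5 : b ^ (m + 1) ≤ (b + 1) ^ (m + 1) := Nat.pow_le_pow_left (by omega) _
    calc (b + 1) ^ (m + 2) = (b + 1) * (b + 1) ^ (m + 1) := by ring
      _ ≤ (b + 1) * (b ^ (m + 1) + (m + 1) * (b + 1) ^ m) := h2
      _ = b ^ (m + 2) + b ^ (m + 1) + (m + 1) * (b + 1) ^ (m + 1) := by ring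
      _ ≤ b ^ (m + 2) + (b + 1) ^ (m + 1) + (m + 1) * (b + 1) ^ (m + 1) := by omega
      _ = b ^ (m + 2) + (m + 2) * (b + 1) ^ (m + 1) := by ring

lemma endgame {n L : ℕ} (hn : 1 ≤ n)
    (key : ∀ d : ℕ, (n + (2 * d + 1)).choose (2 * d + 1) ≤ (n + d).choose d * L) :
    2 ^ n ≤ L := by
  by_contra hc
  push_neg at hc
  set T' := n * 2 ^ (n - 1) with hT'
  set d := T' * n with hd
  -- step N1 : descending factorial comparison
  have hfac : ∀ k, k ≤ n →
      (2 * T' + 1) ^ k * (n + d).descFactorial k ≤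
        (T' + 1) ^ k * (n + (2 * d + 1)).descFactorial k := by
    intro k
    induction k with
    | zero => intro _; simp
    | succ k ih =>
      intro hk
      have IH := ih (by omega)
      rw [Nat.descFactorial_succ, Nat.descFactorial_succ]
      have hpf : (2 * T' + 1) * (n + d - k) ≤ (T' + 1) * (n + (2 * d + 1) - k) := by
        obtain ⟨w, hw⟩ : ∃ w, n = k + 1 + w := ⟨n - k - 1, by omega⟩
        have h1 : n + d - k = d + w + 1 := by omega
        have h2 : n + (2 * d + 1) - k = 2 * d + w + 2 := by omega
        rw [h1, h2]
        have h3 : T' * w ≤ d := by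
          rw [hd]
          exact Nat.mul_le_mul_left T' (by omega)
        nlinarith
      calc (2 * T' + 1) ^ (k + 1) * ((n + d - k) * (n + d).descFactorial k)
          = ((2 * T' + 1) * (n + d - k)) * ((2 * T' + 1) ^ k * (n + d).descFactorial k) := by
            ring
        _ ≤ ((T' + 1) * (n + (2 * d + 1) - k)) *
              ((T' + 1) ^ k * (n + (2 * d + 1)).descFactorial k) := Nat.mul_le_mul hpf IH
        _ = (T' + 1) ^ (k + 1) * ((n + (2 * d + 1) - k) * (n + (2 * d + 1)).descFactorial k) := by
            ring
  have hN1 := hfac n le_rfl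
  rw [Nat.descFactorial_eq_factorial_mul_choose, Nat.descFactorial_eq_factorial_mul_choose] at hN1
  have hCM : (2 * T' + 1) ^ n * (n + d).choose n ≤
      (T' + 1) ^ n * (n + (2 * d + 1)).choose n := by
    have hpos : 0 < n.factorial := Nat.factorial_pos n
    refine Nat.le_of_mul_le_mul_left ?_ hpos
    calc n.factorial * ((2 * T' + 1) ^ n * (n + d).choose n)
        = (2 * T' + 1) ^ n * (n.factorial * (n + d).choose n) := by ring
      _ ≤ (T' + 1) ^ n * (n.factorial * (n + (2 * d + 1)).choose n) := hN1
      _ = n.factorial * ((T' + 1) ^ n * (n + (2 * d + 1)).choose n) := by ring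
  -- symmetric forms of the binomial coefficients
  have hsymm1 : (n + d).choose d = (n + d).choose n := by
    have h := Nat.choose_symm (Nat.le_add_right n d)
    simpa [Nat.add_sub_cancel_left] using h
  have hsymm2 : (n + (2 * d + 1)).choose (2 * d + 1) = (n + (2 * d + 1)).choose n := by
    have h := Nat.choose_symm (Nat.le_add_right n (2 * d + 1))
    simpa [Nat.add_sub_cancel_left] using h
  have hkey := key d
  rw [hsymm1, hsymm2] at hkey
  -- step N2
  have hN2 : (2 ^ n - 1) * (T' + 1) ^ n < (2 * T' + 1) ^ n := by
    obtain ⟨m, hm⟩ : ∃ m, n = m + 1 := ⟨n - 1, by omega⟩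
    have hb : (2 * T' + 2) ^ (m + 1) ≤ (2 * T' + 1) ^ (m + 1) + (m + 1) * (2 * T' + 2) ^ m := by
      have h := pow_succ_bound m (2 * T' + 1)
      simpa [show 2 * T' + 1 + 1 = 2 * T' + 2 by ring] using h
    have he2 : (2 * T' + 2) ^ (m + 1) = 2 ^ (m + 1) * (T' + 1) ^ (m + 1) := by
      rw [show 2 * T' + 2 = 2 * (T' + 1) by ring, mul_pow]
    have he3 : (m + 1) * (2 * T' + 2) ^ m = ((m + 1) * 2 ^ m) * (T' + 1) ^ m := by
      rw [show 2 * T' + 2 = 2 * (T' + 1) by ring, mul_pow]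
      ring
    have he4 : (m + 1) * 2 ^ m = T' := by
      rw [hT', hm]
      simp
    have he5 : T' * (T' + 1) ^ m < (T' + 1) ^ (m + 1) := by
      have hTpos : 0 < (T' + 1) ^ m := pow_pos (Nat.succ_pos T') m
      calc T' * (T' + 1) ^ m < (T' + 1) * (T' + 1) ^ m :=
            Nat.mul_lt_mul_of_pos_right (Nat.lt_succ_self T') hTpos
        _ = (T' + 1) ^ (m + 1) := by ring
    have h6 : 2 ^ (m + 1) * (T' + 1) ^ (m + 1) <
        (2 * T' + 1) ^ (m + 1) + (T' + 1) ^ (m + 1) := by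
      rw [← he2]
      calc (2 * T' + 2) ^ (m + 1) ≤ (2 * T' + 1) ^ (m + 1) + (m + 1) * (2 * T' + 2) ^ m := hb
        _ = (2 * T' + 1) ^ (m + 1) + T' * (T' + 1) ^ m := by rw [he3, he4]
        _ < (2 * T' + 1) ^ (m + 1) + (T' + 1) ^ (m + 1) := by omega
    have h8 : 1 ≤ 2 ^ (m + 1) := Nat.one_le_two_pow
    have h7 : (2 ^ (m + 1) - 1) * (T' + 1) ^ (m + 1) + (T' + 1) ^ (m + 1) =
        2 ^ (m + 1) * (T' + 1) ^ (m + 1) := by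
      have : (2 ^ (m + 1) - 1) * (T' + 1) ^ (m + 1) + (T' + 1) ^ (m + 1) =
          ((2 ^ (m + 1) - 1) + 1) * (T' + 1) ^ (m + 1) := by ring
      rw [this, Nat.sub_add_cancel h8]
    rw [hm]
    omega
  -- conclusion
  have hCpos : 0 < (n + d).choose n := Nat.choose_pos (Nat.le_add_right n d)
  have hL : L ≤ 2 ^ n - 1 := by
    have h9 : 1 ≤ 2 ^ n := Nat.one_le_two_pow
    omega
  have c1 : (2 * T' + 1) ^ n * (n + d).choose n ≤ (T' + 1) ^ n * ((n + d).choose n * L) :=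
    le_trans hCM (Nat.mul_le_mul_left _ hkey)
  have c2 : (T' + 1) ^ n * ((n + d).choose n * L) ≤
      ((2 ^ n - 1) * (T' + 1) ^ n) * (n + d).choose n := by
    calc (T' + 1) ^ n * ((n + d).choose n * L)
        ≤ (T' + 1) ^ n * ((n + d).choose n * (2 ^ n - 1)) :=
          Nat.mul_le_mul_left _ (Nat.mul_le_mul_left _ hL)
      _ = ((2 ^ n - 1) * (T' + 1) ^ n) * (n + d).choose n := by ring
  have c3 : ((2 ^ n - 1) * (T' + 1) ^ n) * (n + d).choose n <
      (2 * T' + 1) ^ n * (n + d).choose n :=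
    Nat.mul_lt_mul_of_lt_of_le hN2 le_rfl hCpos
  have := lt_of_le_of_lt (le_trans c1 c2) c3
  exact absurd this (lt_irrefl _)

end MilnorNum
open MilnorAux MilnorAux2 MilnorAux3 MilnorNum in
/-- If `f` lies in the cube of the maximal ideal `m = (X₁, …, Xₙ)` (no terms of degree `≤ 2`)
and its Jacobian algebra is finite-dimensional, then `dim_ℂ Q_f ≥ 2ⁿ`. -/
theorem milnor_ge_two_pow {n : ℕ} (hn : 1 ≤ n) (f : MvPolynomial (Fin n) ℂ)
    (hf : f ∈ (Ideal.span (Set.range (X : Fin n → MvPolynomial (Fin n) ℂ))) ^ 3)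
    (hfd : FiniteDimensional ℂ (MvPolynomial (Fin n) ℂ ⧸ jacobianIdeal f)) :
    2 ^ n ≤ Module.finrank ℂ (MvPolynomial (Fin n) ℂ ⧸ jacobianIdeal f) := by
  classical
  set J := jacobianIdeal f with hJdef
  set L := Module.finrank ℂ (MvPolynomial (Fin n) ℂ ⧸ J) with hLdef
  let b : Module.Basis (Fin L) ℂ (MvPolynomial (Fin n) ℂ ⧸ J) := Module.finBasis ℂ _
  let φ : MvPolynomial (Fin n) ℂ →ₗ[ℂ] MvPolynomial (Fin n) ℂ ⧸ J :=
    (Ideal.Quotient.mkₐ ℂ J).toLinearMap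
  have hφsurj : Function.Surjective φ := fun y => Ideal.Quotient.mk_surjective y
  choose e he using fun l => hφsurj (b l)
  have hE : ∀ x : MvPolynomial (Fin n) ℂ,
      ∃ (c : Fin L → ℂ) (z : MvPolynomial (Fin n) ℂ), z ∈ J ∧ x = (∑ l, c l • e l) + z := by
    intro x
    refine ⟨fun l => b.repr (φ x) l, x - ∑ l, (b.repr (φ x) l) • e l, ?_, by ring⟩
    have hz : φ (x - ∑ l, (b.repr (φ x) l) • e l) = 0 := by
      rw [map_sub, map_sum]
      simp_rw [map_smul, he]
      rw [b.sum_repr (φ x)]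
      exact sub_self _
    have hz2 : Ideal.Quotient.mk J (x - ∑ l, (b.repr (φ x) l) • e l) = 0 := by
      rw [← Ideal.Quotient.mkₐ_eq_mk ℂ J]
      exact hz
    exact Ideal.Quotient.eq_zero_iff_mem.mp hz2
  have hg : ∀ i : Fin n, (fun i => pderiv i f) i ∈ mIdeal n ^ 2 :=
    fun i => pderiv_mem_pow i 2 f hf
  have hkey := key_count (J := J) (g := fun i => pderiv i f) (e := e) hJdef hg hE
  exact endgame hn hkey
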